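/- arXiv:1802.02705 — 2 statements merged into one kernel-verified Lean document; each statement's English description precedes it below -/
import Mathlib

section
/- Let R be a commutative ring of prime characteristic p, 𝔞 an ideal of R, and k, l ∈ ℕ. Then 𝔞^[kl] ⊆ (𝔞^[k])^[l] = (𝔞^[l])^[k], and the containment is an equality if one of k and l is a power of p. -/
open scoped BigOperators

/-- The `q`-th bracket power of an ideal: the ideal generated by `q`-th powers
of elements of `a`. -/
def bracketPow {R : Type*} [CommRing R] (a : Ideal R) (q : ℕ) : Ideal R :=
  Ideal.span ((fun x => x ^ q) '' (a : Set R))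

/-- The generalized `k`-th Frobenius power of an ideal, defined via the base-`p`
digits of `k`:  `𝔞^[k] = ∏ᵢ (𝔞^[pⁱ])^(kᵢ)` where `kᵢ = k / pⁱ % p` is the `i`-th
base-`p` digit of `k` (digits with index `> k` vanish, so the product below suffices). -/
def frobPow {R : Type*} [CommRing R] (p : ℕ) (a : Ideal R) (k : ℕ) : Ideal R :=
  ∏ i ∈ Finset.range (k + 1), bracketPow a (p ^ i) ^ (k / p ^ i % p)

section FrobAux

variable {R : Type*} [CommRing R] {p : ℕ} [Fact p.Prime] [CharP R p]

theorem FA.hp2 : (1:ℕ) < p := (Fact.out : p.Prime).one_lt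

theorem FA.bracketPow_eq_map (a : Ideal R) (m : ℕ) :
    bracketPow a (p ^ m) = Ideal.map (iterateFrobenius R p m) a := by
  conv_rhs => rw [← Ideal.span_eq a]
  rw [Ideal.map_span]
  rfl

theorem FA.map_finset_prod {ι : Type*} (f : R →+* R) (s : Finset ι) (g : ι → Ideal R) :
    Ideal.map f (∏ i ∈ s, g i) = ∏ i ∈ s, Ideal.map f (g i) := by
  classical
  induction s using Finset.induction_on with
  | empty => simpa using Ideal.map_top f
  | insert _ _ h ih => rw [Finset.prod_insert h, Finset.prod_insert h, Ideal.map_mul, ih]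

theorem FA.map_map_add (a : Ideal R) (m n : ℕ) :
    Ideal.map (iterateFrobenius R p m) (Ideal.map (iterateFrobenius R p n) a)
      = Ideal.map (iterateFrobenius R p (m + n)) a := by
  rw [Ideal.map_map, ← iterateFrobenius_add]

/-- key carry inequality -/
theorem FA.map_succ_le (a : Ideal R) (m : ℕ) :
    Ideal.map (iterateFrobenius R p (m + 1)) a ≤ (Ideal.map (iterateFrobenius R p m) a) ^ p := by
  conv_lhs => rw [← Ideal.span_eq a]
  rw [Ideal.map_span, Ideal.span_le]
  rintro y ⟨x, hx, rfl⟩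
  have hxp : iterateFrobenius R p (m + 1) x = (iterateFrobenius R p m x) ^ p := by
    rw [iterateFrobenius_def, iterateFrobenius_def, pow_succ, pow_mul]
  rw [SetLike.mem_coe, hxp]
  exact Ideal.pow_mem_pow (Ideal.mem_map_of_mem _ hx) p

theorem FA.sum_digits_mod (n : ℕ) : ∀ N, ∑ i ∈ Finset.range N, n / p ^ i % p * p ^ i = n % p ^ N := by
  intro N
  induction N with
  | zero => simp [Nat.mod_one]
  | succ N ih =>
    rw [Finset.sum_range_succ, ih]
    have hp2 : (1:ℕ) < p := FA.hp2
    have hA : 0 < p ^ N := Nat.pow_pos (by omega)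
    have h2 : n % p ^ N < p ^ N := Nat.mod_lt _ hA
    have h1 : n / p ^ N % p < p := Nat.mod_lt _ (by omega)
    have key : n = n / p ^ N / p * p ^ (N + 1) + (n / p ^ N % p * p ^ N + n % p ^ N) := by
      have e1 := Nat.div_add_mod n (p ^ N)
      have e2 := Nat.div_add_mod (n / p ^ N) p
      calc n = p ^ N * (n / p ^ N) + n % p ^ N := e1.symm
        _ = p ^ N * (p * (n / p ^ N / p) + n / p ^ N % p) + n % p ^ N := by rw [e2]
        _ = n / p ^ N / p * p ^ (N + 1) + (n / p ^ N % p * p ^ N + n % p ^ N) := by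
            rw [pow_succ]; ring
    have hlt : n / p ^ N % p * p ^ N + n % p ^ N < p ^ (N + 1) := by
      calc n / p ^ N % p * p ^ N + n % p ^ N
          < n / p ^ N % p * p ^ N + p ^ N := by omega
        _ = (n / p ^ N % p + 1) * p ^ N := by ring
        _ ≤ p * p ^ N := Nat.mul_le_mul_right _ (by omega)
        _ = p ^ (N + 1) := by rw [pow_succ]; ring
    conv_rhs => rw [key, add_comm]
    rw [Nat.add_mul_mod_self_right, Nat.mod_eq_of_lt hlt]
    omega

theorem FA.prod_digits_extend (a : Ideal R) {n K K' : ℕ} (h : K ≤ K') (hn : n < p ^ K) :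
    ∏ i ∈ Finset.range K', (Ideal.map (iterateFrobenius R p i) a) ^ (n / p ^ i % p)
      = ∏ i ∈ Finset.range K, (Ideal.map (iterateFrobenius R p i) a) ^ (n / p ^ i % p) := by
  symm
  apply Finset.prod_subset (Finset.range_subset_range.2 h)
  intro i _ hi
  have hKi : K ≤ i := by simpa using hi
  have : n < p ^ i := lt_of_lt_of_le hn (Nat.pow_le_pow_right (by have := FA.hp2 (p := p); omega) hKi)
  simp [Nat.div_eq_of_lt this]

theorem FA.lt_pow_succ_self (n : ℕ) : n < p ^ (n + 1) :=
  lt_of_lt_of_le (Nat.lt_pow_self FA.hp2 : n < p ^ n)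
    (Nat.pow_le_pow_right (by have := FA.hp2 (p := p); omega) (Nat.le_succ n))

theorem FA.frobPow_eq_prod (a : Ideal R) {n N : ℕ} (hN : n < p ^ N) :
    frobPow p a n = ∏ i ∈ Finset.range N, (Ideal.map (iterateFrobenius R p i) a) ^ (n / p ^ i % p) := by
  have h1 : frobPow p a n
      = ∏ i ∈ Finset.range (n + 1), (Ideal.map (iterateFrobenius R p i) a) ^ (n / p ^ i % p) := by
    unfold frobPow
    exact Finset.prod_congr rfl fun i _ => by rw [FA.bracketPow_eq_map]
  rw [h1, ← FA.prod_digits_extend a (le_max_left (n+1) N) (FA.lt_pow_succ_self n),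
    ← FA.prod_digits_extend a (le_max_right (n+1) N) hN]

/-- uniqueness of base-p digits -/
theorem FA.digits_unique : ∀ (N : ℕ) (c : ℕ → ℕ) (n : ℕ), (∀ i, i < N → c i < p) →
    (∑ i ∈ Finset.range N, c i * p ^ i = n) → ∀ i, i < N → c i = n / p ^ i % p := by
  intro N
  induction N with
  | zero => intro c n _ _ i hi; omega
  | succ N ih =>
    intro c n hc hsum i hi
    have hp2 : (1:ℕ) < p := FA.hp2
    have hrw : ∑ i ∈ Finset.range (N + 1), c i * p ^ i
        = p * (∑ j ∈ Finset.range N, c (j + 1) * p ^ j) + c 0 := by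
      rw [Finset.sum_range_succ', Finset.mul_sum]
      simp only [pow_zero, mul_one]
      congr 1
      exact Finset.sum_congr rfl fun j _ => by rw [pow_succ]; ring
    rw [hrw] at hsum
    have hc0 : c 0 < p := hc 0 (by omega)
    have hmod : n % p = c 0 := by
      rw [← hsum, Nat.mul_add_mod]
      exact Nat.mod_eq_of_lt hc0
    have hdiv : n / p = ∑ j ∈ Finset.range N, c (j + 1) * p ^ j := by
      rw [← hsum, Nat.mul_add_div (by omega), Nat.div_eq_of_lt hc0, add_zero]
    match i with
    | 0 => simpa using hmod.symm
    | (j + 1) =>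
      have h2 : c (j + 1) = n / p / p ^ j % p :=
        ih (fun j => c (j + 1)) (n / p) (fun i hi => hc (i+1) (by omega)) hdiv.symm j (by omega)
      rw [Nat.div_div_eq_div_mul, ← pow_succ'] at h2
      exact h2

theorem FA.sum_lt_pow (c : ℕ → ℕ) : ∀ N, (∀ i, i < N → c i < p) →
    ∑ i ∈ Finset.range N, c i * p ^ i < p ^ N := by
  intro N
  induction N with
  | zero => simp
  | succ N ih =>
    intro hc
    have h1 := ih (fun i hi => hc i (by omega))
    have h2 : c N ≤ p - 1 := by have := hc N (by omega); omega
    have h3 : c N * p ^ N ≤ (p - 1) * p ^ N := Nat.mul_le_mul_right _ h2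
    have hp2 : (1:ℕ) < p := FA.hp2
    have h4 : (p - 1) * p ^ N + p ^ N = p ^ (N + 1) := by
      have : (p - 1) * p ^ N + p ^ N = (p - 1 + 1) * p ^ N := by ring
      rw [this]
      have : p - 1 + 1 = p := by omega
      rw [this, pow_succ]; ring
    rw [Finset.sum_range_succ]
    omega

theorem FA.rep_le (a : Ideal R) : ∀ (W N : ℕ) (c : ℕ → ℕ) (n : ℕ),
    (∀ i, N ≤ i → c i = 0) →
    (∑ i ∈ Finset.range N, c i * p ^ i = n) →
    (∑ i ∈ Finset.range N, c i ≤ W) →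
    frobPow p a n ≤ ∏ i ∈ Finset.range N, (Ideal.map (iterateFrobenius R p i) a) ^ c i := by
  intro W
  induction W using Nat.strong_induction_on with
  | _ W IH =>
  intro N c n hc0 hsum hW
  by_cases hsmall : ∀ i, i < N → c i < p
  · have hn : n < p ^ N := by rw [← hsum]; exact FA.sum_lt_pow c N hsmall
    rw [FA.frobPow_eq_prod a hn]
    exact le_of_eq (Finset.prod_congr rfl fun i hi => by
      rw [FA.digits_unique N c n hsmall hsum i (Finset.mem_range.1 hi)])
  · push_neg at hsmall
    obtain ⟨m, hmN, hpm⟩ := hsmall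
    have hp2 : (1:ℕ) < p := FA.hp2
    set N' := max N (m + 2) with hN'def
    have hNN' : N ≤ N' := le_max_left _ _
    have hm2 : m + 2 ≤ N' := le_max_right _ _
    set c' : ℕ → ℕ :=
      Function.update (Function.update c m (c m - p)) (m + 1) (c (m + 1) + 1) with hc'def
    have hne : m ≠ m + 1 := by omega
    have hc'm : c' m = c m - p := by
      rw [hc'def, Function.update_of_ne hne, Function.update_self]
    have hc'm1 : c' (m + 1) = c (m + 1) + 1 := by rw [hc'def, Function.update_self]
    have hc'other : ∀ i, i ≠ m → i ≠ m + 1 → c' i = c i := by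
      intro i h1 h2
      rw [hc'def, Function.update_of_ne h2, Function.update_of_ne h1]
    have hc'0 : ∀ i, N' ≤ i → c' i = 0 := by
      intro i hi
      rw [hc'other i (by omega) (by omega)]
      exact hc0 i (by omega)
    have hm1mem : m + 1 ∈ Finset.range N' := Finset.mem_range.2 (by omega)
    have hmmem' : m ∈ (Finset.range N').erase (m + 1) :=
      Finset.mem_erase.2 ⟨hne, Finset.mem_range.2 (by omega)⟩
    have hsumN' : ∑ i ∈ Finset.range N', c i * p ^ i = n := by
      rw [← hsum]
      symm
      apply Finset.sum_subset (Finset.range_subset_range.2 hNN')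
      intro i _ hi
      rw [hc0 i (by simpa using hi), zero_mul]
    have hWN' : ∑ i ∈ Finset.range N', c i = ∑ i ∈ Finset.range N, c i := by
      symm
      apply Finset.sum_subset (Finset.range_subset_range.2 hNN')
      intro i _ hi
      exact hc0 i (by simpa using hi)
    have hsumdec : ∀ g : ℕ → ℕ, ∑ i ∈ Finset.range N', g i
        = (∑ i ∈ ((Finset.range N').erase (m + 1)).erase m, g i) + g m + g (m + 1) := by
      intro g
      rw [← Finset.sum_erase_add (Finset.range N') g hm1mem,
        ← Finset.sum_erase_add ((Finset.range N').erase (m + 1)) g hmmem']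
    have hprodc : ∀ i ∈ ((Finset.range N').erase (m + 1)).erase m, c' i = c i := by
      intro i hi
      have h1 : i ≠ m := (Finset.mem_erase.1 hi).1
      have h2 : i ≠ m + 1 := (Finset.mem_erase.1 (Finset.mem_erase.1 hi).2).1
      exact hc'other i h1 h2
    have hcm : c m = p + (c m - p) := by omega
    have hsum' : ∑ i ∈ Finset.range N', c' i * p ^ i = n := by
      rw [hsumdec (fun i => c' i * p ^ i)]
      rw [hsumdec (fun i => c i * p ^ i)] at hsumN'
      have hE : ∑ i ∈ ((Finset.range N').erase (m + 1)).erase m, c' i * p ^ i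
          = ∑ i ∈ ((Finset.range N').erase (m + 1)).erase m, c i * p ^ i :=
        Finset.sum_congr rfl fun i hi => by rw [hprodc i hi]
      rw [hE, hc'm, hc'm1, ← hsumN']
      conv_rhs => rw [hcm]
      rw [pow_succ]
      ring
    have hE2 : ∑ i ∈ ((Finset.range N').erase (m + 1)).erase m, c' i
        = ∑ i ∈ ((Finset.range N').erase (m + 1)).erase m, c i :=
      Finset.sum_congr rfl fun i hi => by rw [hprodc i hi]
    have hW' : ∑ i ∈ Finset.range N', c' i < W := by
      have h1 := hsumdec c'
      have h2 := hsumdec c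
      rw [hWN'] at h2
      rw [hE2, hc'm, hc'm1] at h1
      omega
    have hle := IH _ hW' N' c' n hc'0 hsum' le_rfl
    refine le_trans hle ?_
    have hprodN : ∏ i ∈ Finset.range N, (Ideal.map (iterateFrobenius R p i) a) ^ c i
        = ∏ i ∈ Finset.range N', (Ideal.map (iterateFrobenius R p i) a) ^ c i := by
      apply Finset.prod_subset (Finset.range_subset_range.2 hNN')
      intro i _ hi
      rw [hc0 i (by simpa using hi), pow_zero]
    rw [hprodN]
    have hproddec : ∀ g : ℕ → Ideal R, ∏ i ∈ Finset.range N', g i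
        = (∏ i ∈ ((Finset.range N').erase (m + 1)).erase m, g i) * g m * g (m + 1) := by
      intro g
      rw [← Finset.prod_erase_mul (Finset.range N') g hm1mem,
        ← Finset.prod_erase_mul ((Finset.range N').erase (m + 1)) g hmmem']
    rw [hproddec (fun i => (Ideal.map (iterateFrobenius R p i) a) ^ c' i),
      hproddec (fun i => (Ideal.map (iterateFrobenius R p i) a) ^ c i)]
    have hE : ∏ i ∈ ((Finset.range N').erase (m + 1)).erase m,
          (Ideal.map (iterateFrobenius R p i) a) ^ c' i
        = ∏ i ∈ ((Finset.range N').erase (m + 1)).erase m,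
          (Ideal.map (iterateFrobenius R p i) a) ^ c i :=
      Finset.prod_congr rfl fun i hi => by rw [hprodc i hi]
    rw [hE, hc'm, hc'm1]
    set Q := ∏ i ∈ ((Finset.range N').erase (m + 1)).erase m,
      (Ideal.map (iterateFrobenius R p i) a) ^ c i
    set A := Ideal.map (iterateFrobenius R p m) a
    set B := Ideal.map (iterateFrobenius R p (m + 1)) a
    calc Q * A ^ (c m - p) * B ^ (c (m + 1) + 1)
        = Q * A ^ (c m - p) * B ^ (c (m + 1)) * B := by ring
      _ ≤ Q * A ^ (c m - p) * B ^ (c (m + 1)) * A ^ p := Ideal.mul_mono_right (FA.map_succ_le a m)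
      _ = Q * A ^ (p + (c m - p)) * B ^ (c (m + 1)) := by rw [pow_add]; ring
      _ = Q * A ^ (c m) * B ^ (c (m + 1)) := by rw [← hcm]

theorem FA.frobPow_p_pow (a : Ideal R) (e : ℕ) :
    frobPow p a (p ^ e) = Ideal.map (iterateFrobenius R p e) a := by
  have hp2 : (1:ℕ) < p := FA.hp2
  have h : p ^ e < p ^ (e + 1) := Nat.pow_lt_pow_succ hp2
  rw [FA.frobPow_eq_prod a h, Finset.prod_range_succ]
  have h2 : p ^ e / p ^ e % p = 1 := by
    rw [Nat.div_self (by positivity), Nat.mod_eq_of_lt hp2]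
  have h3 : ∏ i ∈ Finset.range e, (Ideal.map (iterateFrobenius R p i) a) ^ (p ^ e / p ^ i % p) = 1 := by
    apply Finset.prod_eq_one
    intro i hi
    have hie : i < e := Finset.mem_range.1 hi
    have h1 : p ^ e / p ^ i % p = 0 := by
      rw [Nat.pow_div (by omega) (by omega)]
      have hsplit : p ^ (e - i) = p ^ (e - i - 1) * p := by
        rw [← pow_succ]
        congr 1
        omega
      rw [hsplit, Nat.mul_mod_left]
    rw [h1, pow_zero]
  rw [h2, pow_one, h3, one_mul]

theorem FA.frobPow_mul_p_pow (a : Ideal R) (k e : ℕ) :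
    frobPow p a (k * p ^ e) = Ideal.map (iterateFrobenius R p e) (frobPow p a k) := by
  have hp2 : (1:ℕ) < p := FA.hp2
  have hkp : k * p ^ e < p ^ (e + (k + 1)) := by
    calc k * p ^ e < p ^ (k + 1) * p ^ e :=
          Nat.mul_lt_mul_of_lt_of_le (FA.lt_pow_succ_self k) le_rfl (by positivity)
      _ = p ^ (e + (k + 1)) := by rw [← pow_add]; ring_nf
  rw [FA.frobPow_eq_prod a hkp, FA.frobPow_eq_prod a (FA.lt_pow_succ_self k),
    FA.map_finset_prod, Finset.prod_range_add]
  have hd1 : ∀ x, x < e → k * p ^ e / p ^ x % p = 0 := by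
    intro x hx
    have he : p ^ e = p ^ x * p ^ (e - x) := by rw [← pow_add]; congr 1; omega
    have hdiv : k * p ^ e / p ^ x = k * p ^ (e - x) := by
      rw [he, ← mul_assoc, mul_comm k (p ^ x), mul_assoc,
        Nat.mul_div_cancel_left _ (by positivity)]
    rw [hdiv]
    have hsplit : p ^ (e - x) = p ^ (e - x - 1) * p := by
      rw [← pow_succ]; congr 1; omega
    rw [hsplit, ← mul_assoc, Nat.mul_mod_left]
  have hd2 : ∀ x, k * p ^ e / p ^ (e + x) = k / p ^ x := by
    intro x
    rw [pow_add, mul_comm k]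
    exact Nat.mul_div_mul_left _ _ (by positivity)
  have h1 : ∏ x ∈ Finset.range e,
      (Ideal.map (iterateFrobenius R p x) a) ^ (k * p ^ e / p ^ x % p) = 1 :=
    Finset.prod_eq_one fun x hx => by rw [hd1 x (Finset.mem_range.1 hx), pow_zero]
  rw [h1, one_mul]
  apply Finset.prod_congr rfl
  intro x _
  rw [Ideal.map_pow, FA.map_map_add, hd2 x]

theorem FA.frobPow_map (a : Ideal R) (e l : ℕ) :
    frobPow p (Ideal.map (iterateFrobenius R p e) a) l
      = Ideal.map (iterateFrobenius R p e) (frobPow p a l) := by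
  unfold frobPow
  rw [FA.map_finset_prod]
  apply Finset.prod_congr rfl
  intro i _
  rw [FA.bracketPow_eq_map, FA.bracketPow_eq_map, FA.map_map_add, Ideal.map_pow,
    FA.map_map_add, add_comm i e]

theorem FA.frobPow_frobPow (a : Ideal R) (k l : ℕ) :
    frobPow p (frobPow p a k) l
      = ∏ i ∈ Finset.range (l + 1), ∏ j ∈ Finset.range (k + 1),
          (Ideal.map (iterateFrobenius R p (i + j)) a) ^ (l / p ^ i % p * (k / p ^ j % p)) := by
  conv_lhs => rw [frobPow]
  apply Finset.prod_congr rfl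
  intro i _
  conv_lhs => rw [FA.bracketPow_eq_map, frobPow]
  rw [FA.map_finset_prod, ← Finset.prod_pow]
  apply Finset.prod_congr rfl
  intro j _
  rw [FA.bracketPow_eq_map, Ideal.map_pow, FA.map_map_add, ← pow_mul, mul_comm]

theorem FA.main_le (a : Ideal R) (k l : ℕ) :
    frobPow p a (k * l) ≤ frobPow p (frobPow p a k) l := by
  classical
  set N := l + 1 + (k + 1) with hNdef
  set s := Finset.range (l + 1) ×ˢ Finset.range (k + 1) with hsdef
  set c : ℕ → ℕ := fun m => ∑ q ∈ s.filter (fun q => q.1 + q.2 = m),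
    l / p ^ q.1 % p * (k / p ^ q.2 % p) with hcdef
  have hmaps : ∀ q ∈ s, q.1 + q.2 ∈ Finset.range N := by
    intro q hq
    simp only [hsdef, Finset.mem_product, Finset.mem_range] at hq
    simp only [Finset.mem_range]
    omega
  have hRHS : frobPow p (frobPow p a k) l
      = ∏ m ∈ Finset.range N, (Ideal.map (iterateFrobenius R p m) a) ^ c m := by
    rw [FA.frobPow_frobPow, ← Finset.prod_product']
    rw [← Finset.prod_fiberwise_of_maps_to hmaps
      (fun q => (Ideal.map (iterateFrobenius R p (q.1 + q.2)) a)
        ^ (l / p ^ q.1 % p * (k / p ^ q.2 % p)))]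
    apply Finset.prod_congr rfl
    intro m _
    have : ∀ q ∈ s.filter (fun q => q.1 + q.2 = m),
        (Ideal.map (iterateFrobenius R p (q.1 + q.2)) a) ^ (l / p ^ q.1 % p * (k / p ^ q.2 % p))
          = (Ideal.map (iterateFrobenius R p m) a) ^ (l / p ^ q.1 % p * (k / p ^ q.2 % p)) := by
      intro q hq
      rw [(Finset.mem_filter.1 hq).2]
    rw [Finset.prod_congr rfl this, Finset.prod_pow_eq_pow_sum]
  have hc0 : ∀ m, N ≤ m → c m = 0 := by
    intro m hm
    have hempty : s.filter (fun q => q.1 + q.2 = m) = ∅ := by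
      apply Finset.filter_false_of_mem
      intro q hq
      have := hmaps q hq
      simp only [Finset.mem_range] at this
      omega
    simp only [hcdef, hempty, Finset.sum_empty]
  have hsumc : ∑ m ∈ Finset.range N, c m * p ^ m = k * l := by
    have step1 : ∀ m ∈ Finset.range N, c m * p ^ m
        = ∑ q ∈ s.filter (fun q => q.1 + q.2 = m),
            l / p ^ q.1 % p * (k / p ^ q.2 % p) * p ^ (q.1 + q.2) := by
      intro m _
      simp only [hcdef]
      rw [Finset.sum_mul]
      apply Finset.sum_congr rfl
      intro q hq
      rw [(Finset.mem_filter.1 hq).2]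
    rw [Finset.sum_congr rfl step1,
      Finset.sum_fiberwise_of_maps_to hmaps
        (fun q => l / p ^ q.1 % p * (k / p ^ q.2 % p) * p ^ (q.1 + q.2))]
    have : ∑ q ∈ s, l / p ^ q.1 % p * (k / p ^ q.2 % p) * p ^ (q.1 + q.2)
        = (∑ i ∈ Finset.range (l + 1), l / p ^ i % p * p ^ i)
          * (∑ j ∈ Finset.range (k + 1), k / p ^ j % p * p ^ j) := by
      rw [Finset.sum_mul_sum, hsdef, Finset.sum_product]
      apply Finset.sum_congr rfl
      intro i _
      apply Finset.sum_congr rfl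
      intro j _
      rw [pow_add]
      ring
    rw [this, FA.sum_digits_mod, FA.sum_digits_mod,
      Nat.mod_eq_of_lt (FA.lt_pow_succ_self l), Nat.mod_eq_of_lt (FA.lt_pow_succ_self k),
      mul_comm]
  rw [hRHS]
  exact FA.rep_le a (∑ i ∈ Finset.range N, c i) N c (k * l) hc0 hsumc le_rfl

end FrobAux

theorem stmt_6 {R : Type*} [CommRing R] (p : ℕ) (hp : p.Prime) [CharP R p]
    (a : Ideal R) (k l : ℕ) :
    frobPow p a (k * l) ≤ frobPow p (frobPow p a k) l ∧
      frobPow p (frobPow p a k) l = frobPow p (frobPow p a l) k ∧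
      (((∃ e, k = p ^ e) ∨ (∃ e, l = p ^ e)) →
        frobPow p a (k * l) = frobPow p (frobPow p a k) l) := by
  haveI := Fact.mk hp
  refine ⟨FA.main_le a k l, ?_, ?_⟩
  · rw [FA.frobPow_frobPow, FA.frobPow_frobPow, Finset.prod_comm]
    apply Finset.prod_congr rfl
    intro j _
    apply Finset.prod_congr rfl
    intro i _
    rw [add_comm, mul_comm]
  · rintro (⟨e, rfl⟩ | ⟨e, rfl⟩)
    · rw [FA.frobPow_p_pow, FA.frobPow_map, mul_comm, FA.frobPow_mul_p_pow]
    · rw [FA.frobPow_mul_p_pow, FA.frobPow_p_pow]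
end

section
/- Let R be a regular F-finite domain of prime characteristic p, and let 𝔞 ⊆ 𝔟 be nonzero proper ideals with 𝔞 ⊆ √𝔟. For q a power of p, let μ(q) = max{k ∈ ℕ : 𝔞^[k] ⊄ 𝔟^[q]} and ν(q) = max{k ∈ ℕ : 𝔞^k ⊄ 𝔟^[q]}. Then μ(p) = min{ν(p), p − 1}. -/
open scoped BigOperators

section aux
variable {R : Type*} [CommRing R]

lemma bracketPow_le (b : Ideal R) (q : ℕ) (hq : q ≠ 0) : bracketPow b q ≤ b := by
  rw [bracketPow, Ideal.span_le]
  rintro _ ⟨x, hx, rfl⟩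
  exact Ideal.pow_mem_of_mem b hx q (Nat.pos_of_ne_zero hq)

lemma bracketPow_one (a : Ideal R) : bracketPow a 1 = a := by
  simp [bracketPow, Ideal.span_eq]

lemma bracketPow_pow_le (a b : Ideal R) (hab : a ≤ b) (p i : ℕ) (hp : 1 ≤ p) (hi : 1 ≤ i) :
    bracketPow a (p ^ i) ≤ bracketPow b p := by
  rw [bracketPow, Ideal.span_le]
  rintro _ ⟨x, hx, rfl⟩
  have hx' : x ^ p ^ (i - 1) ∈ b :=
    Ideal.pow_mem_of_mem b (hab hx) _ (pow_pos (by omega) _)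
  have hxe : (x : R) ^ p ^ i = (x ^ p ^ (i - 1)) ^ p := by
    rw [← pow_mul, ← pow_succ]
    congr 2
    omega
  show x ^ p ^ i ∈ (Ideal.span ((fun y => y ^ p) '' (b : Set R)) : Ideal R)
  rw [hxe]
  exact Ideal.subset_span ⟨_, hx', rfl⟩

lemma frobPow_eq_pow (p : ℕ) (hp : 2 ≤ p) (a : Ideal R) (k : ℕ) (hk : k < p) :
    frobPow p a k = a ^ k := by
  rw [frobPow, Finset.prod_eq_single 0]
  · simp only [pow_zero, Nat.div_one, bracketPow_one]
    rw [Nat.mod_eq_of_lt hk]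
  · intro i _ h0
    have hpk : k < p ^ i :=
      lt_of_lt_of_le hk (Nat.le_self_pow h0 p)
    rw [Nat.div_eq_of_lt hpk]
    simp
  · simp

lemma frobPow_le_of_ge (p : ℕ) (hp : 2 ≤ p) (a b : Ideal R) (hab : a ≤ b)
    (k : ℕ) (hk : p ≤ k) : frobPow p a k ≤ bracketPow b p := by
  have hk0 : k ≠ 0 := by omega
  set i := Nat.log p k with hi
  have hi1 : 1 ≤ i := Nat.log_pos (by omega) hk
  have hple : p ^ i ≤ k := Nat.pow_log_le_self p hk0
  have hdig : 1 ≤ k / p ^ i := (Nat.one_le_div_iff (by positivity)).mpr hple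
  have hdlt : k / p ^ i < p := by
    have := Nat.lt_pow_succ_log_self (by omega : 1 < p) k
    rw [Nat.div_lt_iff_lt_mul (by positivity : 0 < p ^ i)]
    calc k < p ^ (i + 1) := this
    _ = p * p ^ i := by ring
  have himem : i ∈ Finset.range (k + 1) := by
    have : i < p ^ i := Nat.lt_pow_self (by omega : 1 < p)
    exact Finset.mem_range.mpr (by omega)
  have hprod := Finset.mul_prod_erase (Finset.range (k + 1))
    (fun j => bracketPow a (p ^ j) ^ (k / p ^ j % p)) himem
  rw [frobPow, ← hprod]
  refine le_trans Ideal.mul_le_left ?_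
  show bracketPow a (p ^ i) ^ (k / p ^ i % p) ≤ bracketPow b p
  have hexp : k / p ^ i % p = k / p ^ i := Nat.mod_eq_of_lt hdlt
  rw [hexp]
  exact le_trans (Ideal.pow_le_self (by omega)) (bracketPow_pow_le a b hab p i (by omega) hi1)

end aux

/-- With `μ(q) = max{k : 𝔞^[k] ⊄ 𝔟^[q]}` and
`ν(q) = max{k : 𝔞^k ⊄ 𝔟^[q]}`, one has `μ(p) = min(ν(p), p − 1)`. -/
theorem stmt_17 {R : Type*} [CommRing R] [IsDomain R] [IsNoetherianRing R]
    (p : ℕ) [Fact p.Prime] [CharP R p]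
    (hFfin : (frobenius R p).Finite) (hreg : (frobenius R p).Flat)
    (a b : Ideal R) (ha0 : a ≠ ⊥) (hb0 : b ≠ ⊥) (haT : a ≠ ⊤) (hbT : b ≠ ⊤)
    (hab : a ≤ b) (hrad : a ≤ b.radical) :
    sSup {k : ℕ | ¬ frobPow p a k ≤ bracketPow b p} =
      min (sSup {k : ℕ | ¬ a ^ k ≤ bracketPow b p}) (p - 1) := by
  have hp2 : 2 ≤ p := (Fact.out : p.Prime).two_le
  set bp := bracketPow b p with hbp
  have hbpT : bp ≠ ⊤ := fun h => hbT (top_le_iff.mp (h ▸ bracketPow_le b p (by omega)))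
  set T : Set ℕ := {k : ℕ | ¬ a ^ k ≤ bp} with hT
  set S : Set ℕ := {k : ℕ | ¬ frobPow p a k ≤ bp} with hS
  have h0T : 0 ∈ T := by
    simp only [hT, Set.mem_setOf_eq, pow_zero, Ideal.one_eq_top, top_le_iff]
    exact hbpT
  -- a ≤ radical bp
  have hbrad : b ≤ bp.radical := by
    intro x hx
    exact ⟨p, Ideal.subset_span ⟨x, hx, rfl⟩⟩
  have harad : a ≤ bp.radical :=
    le_trans hrad (le_trans (Ideal.radical_mono hbrad) (le_of_eq (Ideal.radical_idem _)))
  obtain ⟨n, hn⟩ := Ideal.exists_pow_le_of_le_radical_of_fg harad (IsNoetherian.noetherian a)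
  have hTbdd : BddAbove T := by
    refine ⟨n, fun k hk => ?_⟩
    by_contra hkn
    exact hk (le_trans (Ideal.pow_le_pow_right (by omega)) hn)
  have hTne : T.Nonempty := ⟨0, h0T⟩
  set ν := sSup T with hν
  have hνmem : ν ∈ T := Nat.sSup_mem hTne hTbdd
  have hTdc : ∀ k, k ≤ ν → k ∈ T := by
    intro k hk hcon
    exact hνmem (le_trans (Ideal.pow_le_pow_right hk) hcon)
  set m := min ν (p - 1) with hm
  have hmp : m < p := by omega
  have hmS : m ∈ S := by
    simp only [hS, Set.mem_setOf_eq, frobPow_eq_pow p hp2 a m hmp]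
    exact hTdc m (by omega)
  have hSub : ∀ k ∈ S, k ≤ m := by
    intro k hk
    by_cases hkp : p ≤ k
    · exact absurd (frobPow_le_of_ge p hp2 a b hab k hkp) hk
    · push_neg at hkp
      have hkT : k ∈ T := by
        simpa only [hS, hT, Set.mem_setOf_eq, frobPow_eq_pow p hp2 a k hkp] using hk
      have : k ≤ ν := le_csSup hTbdd hkT
      omega
  exact le_antisymm (csSup_le ⟨m, hmS⟩ hSub) (le_csSup ⟨m, hSub⟩ hmS)
end
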